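/- For every μ > 0, the function τ ↦ e^{−μτ} (4τ cosh τ / sinh³ τ − 4/ sinh² τ) is integrable on (0,∞) and ∫₀^∞ e^{−μτ} (4τ cosh τ / sinh³ τ − 4/ sinh² τ) dτ = −2(μ+1) + μ² · Σ_{l=0}^∞ 1/(l + μ/2)². -/

import Mathlib

open MeasureTheory Real

open Set Filter Topology

set_option maxHeartbeats 1000000

lemma nonneg_of_deriv {f f' : ℝ → ℝ} (hd : ∀ x, HasDerivAt f (f' x) x)
    (h0 : f 0 = 0) (hpos : ∀ x, 0 < x → 0 ≤ f' x) {x : ℝ} (hx : 0 ≤ x) : 0 ≤ f x := by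
  have hmono : MonotoneOn f (Ici 0) := by
    apply monotoneOn_of_deriv_nonneg (convex_Ici 0)
      (fun y _ => (hd y).continuousAt.continuousWithinAt)
      (fun y _ => (hd y).differentiableAt.differentiableWithinAt)
    intro y hy
    rw [interior_Ici] at hy
    rw [(hd y).deriv]
    exact hpos y hy
  simpa [h0] using hmono self_mem_Ici hx hx

lemma sinh_le_mul_cosh {x : ℝ} (hx : 0 ≤ x) : Real.sinh x ≤ x * Real.cosh x := by
  have h := nonneg_of_deriv (f := fun x => x * Real.cosh x - Real.sinh x)
    (f' := fun x => x * Real.sinh x) (fun y => ?_) (by simp) (fun y hy => by positivity) hx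
  · linarith
  · have := ((hasDerivAt_id y).mul (Real.hasDerivAt_cosh y)).sub (Real.hasDerivAt_sinh y)
    refine this.congr_deriv ?_; simp only [id_eq]; ring

lemma cosh_sub_one_le {x : ℝ} (hx : 0 ≤ x) : Real.cosh x - 1 ≤ x * Real.sinh x := by
  have h := nonneg_of_deriv (f := fun x => x * Real.sinh x - Real.cosh x + 1)
    (f' := fun x => x * Real.cosh x) (fun y => ?_) (by simp) ?_ hx
  · linarith
  · have := (((hasDerivAt_id y).mul (Real.hasDerivAt_sinh y)).sub (Real.hasDerivAt_cosh y)).add_const 1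
    refine this.congr_deriv ?_; simp only [id_eq]; ring
  · intro y hy; positivity

lemma sinh_sub_self_le {x : ℝ} (hx : 0 ≤ x) : Real.sinh x - x ≤ x ^ 2 * Real.sinh x := by
  have h := nonneg_of_deriv (f := fun x => x + x ^ 2 * Real.sinh x - Real.sinh x)
    (f' := fun x => 1 + (2 * x * Real.sinh x + x ^ 2 * Real.cosh x) - Real.cosh x)
    (fun y => ?_) (by simp) ?_ hx
  · linarith
  · have h1 : HasDerivAt (fun x : ℝ => x ^ 2) (2 * y) y := by
      simpa using (hasDerivAt_pow 2 y)
    have := ((hasDerivAt_id y).add (h1.mul (Real.hasDerivAt_sinh y))).sub (Real.hasDerivAt_sinh y)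
    exact this
  · intro y hy
    have h2 : Real.cosh y - 1 ≤ y * Real.sinh y := cosh_sub_one_le hy.le
    have h3 : 0 ≤ y * Real.sinh y := by
      have := Real.sinh_pos_iff.mpr hy; positivity
    have h4 : 0 ≤ y ^ 2 * Real.cosh y := by positivity
    nlinarith

lemma tendsto_mul_exp_neg {b : ℝ} (hb : 0 < b) :
    Tendsto (fun x : ℝ => x * Real.exp (-b * x)) atTop (𝓝 0) := by
  have h1 := (tendsto_pow_mul_exp_neg_atTop_nhds_zero 1).comp
    (tendsto_id.const_mul_atTop hb)
  have h2 := h1.const_mul (1/b)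
  rw [mul_zero] at h2
  refine h2.congr (fun x => ?_)
  simp only [Function.comp, pow_one, id_eq]
  field_simp

lemma tendsto_exp_neg_mul {b : ℝ} (hb : 0 < b) :
    Tendsto (fun x : ℝ => Real.exp (-b * x)) atTop (𝓝 0) := by
  have := Real.tendsto_exp_atBot.comp (tendsto_id.const_mul_atTop_of_neg (neg_neg_iff_pos.mpr hb))
  exact this.congr (fun x => rfl)

lemma mul_exp_neg_integral {b : ℝ} (hb : 0 < b) :
    IntegrableOn (fun s : ℝ => s * Real.exp (-b * s)) (Ioi 0) ∧
      ∫ s in Ioi (0:ℝ), s * Real.exp (-b * s) = 1 / b ^ 2 := by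
  set F : ℝ → ℝ := fun s => -(Real.exp (-b * s) * (s / b + 1 / b ^ 2)) with hF
  have hderiv : ∀ x ∈ Ioi (0:ℝ), HasDerivAt F (x * Real.exp (-b * x)) x := by
    intro x _
    have he : HasDerivAt (fun s : ℝ => Real.exp (-b * s)) (Real.exp (-b * x) * (-b)) x := by
      simpa using (((hasDerivAt_id x).const_mul (-b)).exp)
    have hl : HasDerivAt (fun s : ℝ => s / b + 1 / b ^ 2) (1 / b) x :=
      ((hasDerivAt_id x).div_const b).add_const (1 / b ^ 2)
    have := (he.mul hl).neg
    refine this.congr_deriv ?_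
    have hb' : b ≠ 0 := hb.ne'
    field_simp
    ring
  have hpos : ∀ x ∈ Ioi (0:ℝ), 0 ≤ x * Real.exp (-b * x) := fun x hx => by have : (0:ℝ) < x := hx; positivity
  have htop : Tendsto F atTop (𝓝 0) := by
    have h1 := (tendsto_mul_exp_neg hb).const_mul (1/b)
    have h2 := (tendsto_exp_neg_mul hb).const_mul (1/b^2)
    have := (h1.add h2).neg
    simp only [mul_zero, add_zero, neg_zero] at this
    refine this.congr (fun x => ?_)
    simp only [hF]
    ring
  have hcont : ContinuousWithinAt F (Ici 0) 0 := by
    apply Continuous.continuousWithinAt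
    fun_prop
  refine ⟨integrableOn_Ioi_deriv_of_nonneg hcont hderiv hpos htop, ?_⟩
  rw [integral_Ioi_of_hasDerivAt_of_nonneg hcont hderiv hpos htop]
  simp [hF]

lemma summable_inv_sq_add {c : ℝ} (hc : 0 < c) :
    Summable (fun n : ℕ => 1 / ((n : ℝ) + c) ^ 2) := by
  set m := min 1 c with hm
  have hm0 : 0 < m := lt_min one_pos hc
  have hbase : Summable (fun n : ℕ => 1 / ((n : ℝ) + 1) ^ 2) := by
    have h0 : Summable (fun n : ℕ => 1 / (n : ℝ) ^ 2) :=
      Real.summable_one_div_nat_pow.mpr one_lt_two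
    have := (summable_nat_add_iff 1).mpr h0
    refine this.congr (fun n => ?_)
    push_cast
    ring
  refine Summable.of_nonneg_of_le (fun n => by positivity) (fun n => ?_)
    (hbase.mul_left (1 / m ^ 2))
  have h1 : m * ((n : ℝ) + 1) ≤ (n : ℝ) + c := by
    have h2 : m ≤ 1 := min_le_left _ _
    have h3 : m ≤ c := min_le_right _ _
    have h4 : (0:ℝ) ≤ n := Nat.cast_nonneg n
    nlinarith
  have hsq : (m * ((n:ℝ)+1))^2 ≤ ((n:ℝ)+c)^2 :=
    pow_le_pow_left₀ (by positivity) h1 2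
  calc 1/((n:ℝ)+c)^2 ≤ 1/(m*((n:ℝ)+1))^2 :=
        one_div_le_one_div_of_le (by positivity) hsq
    _ = 1/m^2 * (1/((n:ℝ)+1)^2) := by rw [mul_pow]; field_simp

lemma series_identity {mu : ℝ} (hmu : 0 < mu) {s : ℝ} (hs : 0 < s) :
    ∑' n : ℕ, 2 * s * Real.exp (-(mu + 2 * n) * s)
      = Real.exp (-mu * s) * (s * Real.cosh s / Real.sinh s) + s * Real.exp (-mu * s) := by
  have hr0 : (0:ℝ) ≤ Real.exp (-2 * s) := (Real.exp_pos _).le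
  have hr1 : Real.exp (-2 * s) < 1 := by
    rw [Real.exp_lt_one_iff]; nlinarith
  have hterm : ∀ n : ℕ, 2 * s * Real.exp (-(mu + 2 * n) * s)
      = 2 * s * Real.exp (-mu * s) * Real.exp (-2 * s) ^ n := by
    intro n
    rw [show (-(mu + 2 * (n:ℝ)) * s) = (-mu * s) + (n:ℝ) * (-2 * s) by ring,
      Real.exp_add, Real.exp_nat_mul]
    ring
  rw [tsum_congr hterm, tsum_mul_left, tsum_geometric_of_lt_one hr0 hr1]
  have hX1 : (1:ℝ) < Real.exp s := by
    rw [Real.one_lt_exp_iff]; exact hs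
  have hX0 : Real.exp s ≠ 0 := (Real.exp_pos s).ne'
  have hq : Real.exp (-2 * s) = (Real.exp s * Real.exp s)⁻¹ := by
    rw [← Real.exp_add, ← Real.exp_neg]; ring_nf
  rw [Real.sinh_eq, Real.cosh_eq, hq, Real.exp_neg]
  have hd1 : (1:ℝ) - (Real.exp s * Real.exp s)⁻¹ ≠ 0 := by
    have h2 : (1:ℝ) < Real.exp s * Real.exp s := by nlinarith
    have : (Real.exp s * Real.exp s)⁻¹ < 1 := by
      rw [inv_lt_one_iff₀]; right; exact h2
    nlinarith
  have hd2 : Real.exp s - (Real.exp s)⁻¹ ≠ 0 := by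
    have : (Real.exp s)⁻¹ < 1 := by rw [inv_lt_one_iff₀]; right; exact hX1
    nlinarith
  have hd3 : (Real.exp s - (Real.exp s)⁻¹) / 2 ≠ 0 := by
    intro h; apply hd2; linarith [h]
  have hne : Real.exp s ^ 2 - 1 ≠ 0 := by nlinarith
  have ha : (-1 + Real.exp s ^ 2) * (-1 + Real.exp s ^ 2)⁻¹ = 1 :=
    mul_inv_cancel₀ (by nlinarith)
  have key : (1 - (Real.exp s * Real.exp s)⁻¹)⁻¹ = Real.exp s ^ 2 / (Real.exp s ^ 2 - 1) := by
    rw [eq_div_iff hne]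
    field_simp
  rw [key, show -mu * s = -(s * mu) from by ring]
  field_simp
  ring

lemma tendsto_div_sinh : Tendsto (fun τ : ℝ => τ / Real.sinh τ) (𝓝[>] (0:ℝ)) (𝓝 1) := by
  have h := hasDerivAt_iff_tendsto_slope.mp (Real.hasDerivAt_sinh 0)
  rw [Real.cosh_zero] at h
  have h2 : Tendsto (fun x : ℝ => Real.sinh x / x) (𝓝[>] (0:ℝ)) (𝓝 1) := by
    refine (h.mono_left (nhdsWithin_mono 0 (fun x hx => ne_of_gt hx))).congr (fun x => ?_)
    simp [slope_def_field, Real.sinh_zero]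
  have h3 := h2.inv₀ one_ne_zero
  rw [inv_one] at h3
  exact h3.congr (fun x => inv_div _ _)

lemma tendsto_B : Tendsto (fun τ : ℝ => τ * Real.cosh τ / Real.sinh τ) (𝓝[>] (0:ℝ)) (𝓝 1) := by
  have hc : Tendsto (fun τ : ℝ => Real.cosh τ) (𝓝[>] (0:ℝ)) (𝓝 1) := by
    have := (Real.continuous_cosh.tendsto 0)
    rw [Real.cosh_zero] at this
    exact this.mono_left nhdsWithin_le_nhds
  have := hc.mul tendsto_div_sinh
  rw [mul_one] at this
  exact this.congr (fun x => by ring)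

lemma tendsto_A : Tendsto (fun τ : ℝ => Real.cosh τ / Real.sinh τ - τ / Real.sinh τ ^ 2)
    (𝓝[>] (0:ℝ)) (𝓝 0) := by
  have hup : Tendsto (fun τ : ℝ => (4 * τ * Real.cosh τ) * (τ * Real.cosh τ / Real.sinh τ))
      (𝓝[>] (0:ℝ)) (𝓝 0) := by
    have hc : Tendsto (fun τ : ℝ => 4 * τ * Real.cosh τ) (𝓝[>] (0:ℝ)) (𝓝 0) := by
      have hcont : Continuous (fun τ : ℝ => 4 * τ * Real.cosh τ) := by fun_prop
      have h0 : Tendsto (fun τ : ℝ => 4 * τ * Real.cosh τ) (𝓝 0) (𝓝 0) := by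
        simpa using hcont.tendsto 0
      exact h0.mono_left nhdsWithin_le_nhds
    have := hc.mul tendsto_B
    rwa [zero_mul] at this
  apply squeeze_zero' ?_ ?_ hup
  · filter_upwards [self_mem_nhdsWithin] with τ (hτ : 0 < τ)
    have hS : 0 < Real.sinh τ := Real.sinh_pos_iff.mpr hτ
    have hC : 1 ≤ Real.cosh τ := Real.one_le_cosh τ
    have hτS : τ ≤ Real.sinh τ := Real.self_le_sinh_iff.mpr hτ.le
    have hA : Real.cosh τ / Real.sinh τ - τ / Real.sinh τ ^ 2
        = (Real.sinh τ * Real.cosh τ - τ) / Real.sinh τ ^ 2 := by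
      field_simp
    rw [hA]
    apply div_nonneg _ (by positivity)
    nlinarith
  · filter_upwards [self_mem_nhdsWithin] with τ (hτ : 0 < τ)
    have hS : 0 < Real.sinh τ := Real.sinh_pos_iff.mpr hτ
    have hC : 1 ≤ Real.cosh τ := Real.one_le_cosh τ
    have hA : Real.cosh τ / Real.sinh τ - τ / Real.sinh τ ^ 2
        = (Real.sinh τ * Real.cosh τ - τ) / Real.sinh τ ^ 2 := by
      field_simp
    have hkey : Real.sinh τ * Real.cosh τ - τ ≤ 4 * τ ^ 2 * (Real.sinh τ * Real.cosh τ) := by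
      have h1 := sinh_sub_self_le (by linarith : (0:ℝ) ≤ 2 * τ)
      rw [Real.sinh_two_mul] at h1
      nlinarith
    rw [hA]
    rw [div_le_iff₀ (by positivity)]
    have : (4 * τ * Real.cosh τ) * (τ * Real.cosh τ / Real.sinh τ) * Real.sinh τ ^ 2
        = 4 * τ ^ 2 * (Real.sinh τ * Real.cosh τ) * Real.cosh τ := by
      field_simp
    rw [this]
    have hSC : (0:ℝ) ≤ 4 * τ ^ 2 * (Real.sinh τ * Real.cosh τ) := by positivity
    nlinarith [hSC, hkey]

lemma hasDerivAt_K (μ : ℝ) (τ : ℝ) (hτ : 0 < τ) :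
    HasDerivAt (fun t : ℝ => Real.exp (-μ * t) *
        (2 * (Real.cosh t / Real.sinh t) - 2 * (t / Real.sinh t ^ 2)
          + 2 * μ * (t * Real.cosh t / Real.sinh t)))
      (Real.exp (-μ * τ) * (4 * τ * Real.cosh τ / (Real.sinh τ) ^ 3 - 4 / (Real.sinh τ) ^ 2)
        - 2 * μ ^ 2 * (Real.exp (-μ * τ) * (τ * Real.cosh τ / Real.sinh τ))) τ := by
  have hs : Real.sinh τ ≠ 0 := ne_of_gt (Real.sinh_pos_iff.mpr hτ)
  have he : HasDerivAt (fun t : ℝ => Real.exp (-μ * t)) (Real.exp (-μ * τ) * (-μ)) τ := by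
    simpa using ((hasDerivAt_id τ).const_mul (-μ)).exp
  have c1 : HasDerivAt (fun t : ℝ => Real.cosh t / Real.sinh t)
      ((Real.sinh τ * Real.sinh τ - Real.cosh τ * Real.cosh τ) / Real.sinh τ ^ 2) τ :=
    (Real.hasDerivAt_cosh τ).div (Real.hasDerivAt_sinh τ) hs
  have hs2 : HasDerivAt (fun t : ℝ => Real.sinh t ^ 2) (2 * Real.sinh τ * Real.cosh τ) τ := by
    have := (Real.hasDerivAt_sinh τ).pow 2
    norm_num at this
    exact this
  have c2 : HasDerivAt (fun t : ℝ => t / Real.sinh t ^ 2)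
      ((1 * Real.sinh τ ^ 2 - τ * (2 * Real.sinh τ * Real.cosh τ)) / (Real.sinh τ ^ 2) ^ 2) τ :=
    (hasDerivAt_id τ).div hs2 (pow_ne_zero 2 hs)
  have c3 : HasDerivAt (fun t : ℝ => t * Real.cosh t / Real.sinh t)
      (((1 * Real.cosh τ + τ * Real.sinh τ) * Real.sinh τ - τ * Real.cosh τ * Real.cosh τ)
        / Real.sinh τ ^ 2) τ :=
    ((hasDerivAt_id τ).mul (Real.hasDerivAt_cosh τ)).div (Real.hasDerivAt_sinh τ) hs
  have hb := ((c1.const_mul 2).sub (c2.const_mul 2)).add (c3.const_mul (2*μ))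
  have hprod := he.mul hb
  refine hprod.congr_deriv ?_
  have hid : Real.cosh τ ^ 2 = Real.sinh τ ^ 2 + 1 := Real.cosh_sq τ
  simp only [Pi.add_apply, Pi.sub_apply]
  field_simp
  linear_combination (-2 * Real.sinh τ * (1 + μ * τ)) * hid


/-- For every `μ > 0`, the function
`τ ↦ e^{−μτ} (4τ cosh τ / sinh³ τ − 4/ sinh² τ)` is integrable on `(0,∞)` and
`∫₀^∞ e^{−μτ} (4τ cosh τ / sinh³ τ − 4/ sinh² τ) dτ
  = −2(μ+1) + μ² · Σ_{l=0}^∞ 1/(l + μ/2)²`. -/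
theorem zaremba_laplace_transform (μ : ℝ) (hμ : 0 < μ) :
    IntegrableOn
      (fun τ : ℝ =>
        Real.exp (-μ * τ) *
          (4 * τ * Real.cosh τ / (Real.sinh τ) ^ 3 - 4 / (Real.sinh τ) ^ 2))
      (Set.Ioi 0) ∧
    ∫ τ in Set.Ioi (0 : ℝ),
        Real.exp (-μ * τ) *
          (4 * τ * Real.cosh τ / (Real.sinh τ) ^ 3 - 4 / (Real.sinh τ) ^ 2)
      = -2 * (μ + 1) + μ ^ 2 * ∑' l : ℕ, 1 / ((l : ℝ) + μ / 2) ^ 2 := by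
  have hsinh : ∀ s : ℝ, 0 < s → 0 < Real.sinh s := fun s hs => Real.sinh_pos_iff.mpr hs
  set h : ℝ → ℝ := fun s => Real.exp (-μ * s) * (s * Real.cosh s / Real.sinh s) with hh
  -- continuity of h on Ioi 0
  have hcontOn : ContinuousOn h (Ioi 0) := by
    apply ContinuousOn.mul (Continuous.continuousOn (by fun_prop))
    apply ContinuousOn.div (Continuous.continuousOn (by fun_prop))
      Real.continuous_sinh.continuousOn
    intro s hs; exact ne_of_gt (hsinh s hs)
  -- bounds for h
  have hnonneg : ∀ s ∈ Ioi (0:ℝ), 0 ≤ h s := by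
    intro s hs
    have hS := hsinh s hs
    have : (0:ℝ) < s := hs
    have hC : 0 < Real.cosh s := Real.cosh_pos s
    positivity
  have hbound : ∀ s ∈ Ioi (0:ℝ), ‖h s‖ ≤ s * Real.exp (-μ * s) + Real.exp (-μ * s) := by
    intro s hs
    have hS := hsinh s hs
    have hs0 : (0:ℝ) < s := hs
    have hC : Real.cosh s ≤ Real.sinh s + 1 := by
      have h1 : Real.cosh s - Real.sinh s = Real.exp (-s) := Real.cosh_sub_sinh s
      have h2 : Real.exp (-s) ≤ 1 := by
        rw [Real.exp_le_one_iff]; linarith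
      linarith
    have hsS : s ≤ Real.sinh s := Real.self_le_sinh_iff.mpr hs0.le
    rw [norm_of_nonneg (hnonneg s hs)]
    have hkey : s * Real.cosh s / Real.sinh s ≤ s + 1 := by
      rw [div_le_iff₀ hS]
      nlinarith
    calc h s ≤ Real.exp (-μ * s) * (s + 1) :=
          mul_le_mul_of_nonneg_left hkey (Real.exp_pos _).le
      _ = s * Real.exp (-μ * s) + Real.exp (-μ * s) := by ring
  have hdom_int : IntegrableOn (fun s : ℝ => s * Real.exp (-μ * s) + Real.exp (-μ * s)) (Ioi 0) :=
    (mul_exp_neg_integral hμ).1.add (exp_neg_integrableOn_Ioi 0 hμ)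
  have h_int : IntegrableOn h (Ioi 0) := by
    apply Integrable.mono' hdom_int (hcontOn.aestronglyMeasurable measurableSet_Ioi)
    exact (ae_restrict_iff' measurableSet_Ioi).mpr (ae_of_all _ hbound)
  set J := ∫ s in Ioi (0:ℝ), h s with hJ
  -- series computation of J
  have hb : ∀ n : ℕ, (0:ℝ) < μ + 2 * n := fun n => by positivity
  have hJT : ∑' n : ℕ, (2 / (μ + 2 * (n:ℝ)) ^ 2) = J + 1 / μ ^ 2 := by
    set F : ℕ → ℝ → ℝ := fun n s => 2 * s * Real.exp (-(μ + 2 * n) * s) with hF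
    have hFint : ∀ n : ℕ, Integrable (F n) (volume.restrict (Ioi 0)) := by
      intro n
      have := ((mul_exp_neg_integral (hb n)).1.const_mul 2)
      exact this.congr (ae_of_all _ (fun s => by simp [hF]; ring))
    have hFval : ∀ n : ℕ, ∫ s in Ioi (0:ℝ), F n s = 2 / (μ + 2 * n) ^ 2 := by
      intro n
      have : ∫ s in Ioi (0:ℝ), F n s = 2 * ∫ s in Ioi (0:ℝ), s * Real.exp (-(μ + 2 * n) * s) := by
        rw [← integral_const_mul]
        exact setIntegral_congr_fun measurableSet_Ioi (fun s _ => by simp [hF]; ring)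
      rw [this, (mul_exp_neg_integral (hb n)).2]
      field_simp
    have hsum2 : Summable (fun n : ℕ => 2 / (μ + 2 * (n:ℝ)) ^ 2) := by
      have hbase := (summable_inv_sq_add (by positivity : (0:ℝ) < μ / 2)).mul_left (1/2)
      refine hbase.congr (fun n => ?_)
      have h1 : ((n:ℝ) + μ / 2) ≠ 0 := by positivity
      have h2 : (μ + 2 * (n:ℝ)) ≠ 0 := (hb n).ne'
      field_simp
      ring
    have hFnorm : Summable (fun n : ℕ => ∫ s in Ioi (0:ℝ), ‖F n s‖) := by
      refine hsum2.congr (fun n => ?_)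
      rw [setIntegral_congr_fun measurableSet_Ioi (fun s hs => ?_), hFval n]
      have hs0 : (0:ℝ) < s := hs
      rw [norm_of_nonneg (by positivity)]
    have hkey := integral_tsum_of_summable_integral_norm hFint hFnorm
    have hrhs : ∫ s in Ioi (0:ℝ), (∑' n : ℕ, F n s)
        = ∫ s in Ioi (0:ℝ), (h s + s * Real.exp (-μ * s)) := by
      refine setIntegral_congr_fun measurableSet_Ioi (fun s hs => ?_)
      exact series_identity hμ hs
    have hlhs : ∑' n : ℕ, ∫ s in Ioi (0:ℝ), F n s = ∑' n : ℕ, (2 / (μ + 2 * (n:ℝ)) ^ 2) :=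
      tsum_congr hFval
    rw [hlhs] at hkey
    rw [hkey, hrhs, integral_add h_int (mul_exp_neg_integral hμ).1, (mul_exp_neg_integral hμ).2]
  -- the primitive g
  set K : ℝ → ℝ := fun τ => Real.exp (-μ * τ) *
      (2 * (Real.cosh τ / Real.sinh τ) - 2 * (τ / Real.sinh τ ^ 2)
        + 2 * μ * (τ * Real.cosh τ / Real.sinh τ)) with hK
  set g : ℝ → ℝ := fun τ => if τ ≤ 0 then 2 * μ else
      K τ + 2 * μ ^ 2 * ∫ s in (0:ℝ)..τ, h s with hg
  have hg0 : g 0 = 2 * μ := by simp [hg]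
  have hgderiv : ∀ τ ∈ Ioi (0:ℝ), HasDerivAt g
      (Real.exp (-μ * τ) * (4 * τ * Real.cosh τ / (Real.sinh τ) ^ 3 - 4 / (Real.sinh τ) ^ 2)) τ := by
    intro τ hτ
    have hτ0 : (0:ℝ) < τ := hτ
    have hKd := hasDerivAt_K μ τ hτ0
    have hM : HasDerivAt (fun u => ∫ s in (0:ℝ)..u, h s) (h τ) τ := by
      have hii : IntervalIntegrable h volume 0 τ := by
        rw [intervalIntegrable_iff, uIoc_of_le hτ0.le]
        exact h_int.mono_set Ioc_subset_Ioi_self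
      exact intervalIntegral.integral_hasDerivAt_right hii
        (hcontOn.stronglyMeasurableAtFilter isOpen_Ioi τ hτ)
        (hcontOn.continuousAt (isOpen_Ioi.mem_nhds hτ))
    have hsum := hKd.add (hM.const_mul (2 * μ ^ 2))
    have hfinal : HasDerivAt (fun t => K t + 2 * μ ^ 2 * ∫ s in (0:ℝ)..t, h s)
        (Real.exp (-μ * τ) * (4 * τ * Real.cosh τ / (Real.sinh τ) ^ 3 - 4 / (Real.sinh τ) ^ 2)) τ := by
      refine hsum.congr_deriv ?_
      ring
    apply hfinal.congr_of_eventuallyEq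
    filter_upwards [isOpen_Ioi.mem_nhds hτ] with t (ht : 0 < t)
    simp only [hg, if_neg (not_le.mpr ht)]
  have hgpos : ∀ τ ∈ Ioi (0:ℝ), 0 ≤
      Real.exp (-μ * τ) * (4 * τ * Real.cosh τ / (Real.sinh τ) ^ 3 - 4 / (Real.sinh τ) ^ 2) := by
    intro τ hτ
    have hτ0 : (0:ℝ) < τ := hτ
    have hS := hsinh τ hτ0
    apply mul_nonneg (Real.exp_pos _).le
    have hrw : 4 * τ * Real.cosh τ / (Real.sinh τ) ^ 3 - 4 / (Real.sinh τ) ^ 2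
        = (4 * τ * Real.cosh τ - 4 * Real.sinh τ) / Real.sinh τ ^ 3 := by
      field_simp
    rw [hrw]
    apply div_nonneg _ (by positivity)
    nlinarith [sinh_le_mul_cosh hτ0.le]
  have hgcont : ContinuousWithinAt g (Ici 0) 0 := by
    rw [← continuousWithinAt_Ioi_iff_Ici]
    unfold ContinuousWithinAt
    rw [hg0]
    have hev : (fun τ => K τ + 2 * μ ^ 2 * ∫ s in (0:ℝ)..τ, h s) =ᶠ[𝓝[>] (0:ℝ)] g := by
      filter_upwards [self_mem_nhdsWithin] with t (ht : 0 < t)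
      simp only [hg, if_neg (not_le.mpr ht)]
    refine Tendsto.congr' hev ?_
    have hKlim : Tendsto K (𝓝[>] (0:ℝ)) (𝓝 (2 * μ)) := by
      have hexp : Tendsto (fun τ : ℝ => Real.exp (-μ * τ)) (𝓝[>] (0:ℝ)) (𝓝 1) := by
        have : Tendsto (fun τ : ℝ => Real.exp (-μ * τ)) (𝓝 0) (𝓝 1) := by
          have hcont : Continuous (fun τ : ℝ => Real.exp (-μ * τ)) := by fun_prop
          simpa using hcont.tendsto 0
        exact this.mono_left nhdsWithin_le_nhds
      have hbr : Tendsto (fun τ : ℝ => 2 * (Real.cosh τ / Real.sinh τ) - 2 * (τ / Real.sinh τ ^ 2)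
          + 2 * μ * (τ * Real.cosh τ / Real.sinh τ)) (𝓝[>] (0:ℝ)) (𝓝 (2 * μ)) := by
        have h1 := (tendsto_A.const_mul 2).add (tendsto_B.const_mul (2 * μ))
        rw [mul_zero, zero_add, mul_one] at h1
        refine h1.congr (fun τ => ?_)
        ring
      have := hexp.mul hbr
      rwa [one_mul] at this
    have hMlim : Tendsto (fun τ : ℝ => 2 * μ ^ 2 * ∫ s in (0:ℝ)..τ, h s) (𝓝[>] (0:ℝ)) (𝓝 0) := by
      have hb1 : ∀ᶠ τ in 𝓝[>] (0:ℝ), ‖2 * μ ^ 2 * ∫ s in (0:ℝ)..τ, h s‖ ≤ 4 * μ ^ 2 * τ := by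
        filter_upwards [Ioc_mem_nhdsGT_of_mem (by constructor <;> norm_num : (0:ℝ) ∈ Ico (0:ℝ) 1)]
          with τ hτ
        obtain ⟨hτ0, hτ1⟩ := hτ
        have hbd : ‖∫ s in (0:ℝ)..τ, h s‖ ≤ 2 * |τ - 0| := by
          apply intervalIntegral.norm_integral_le_of_norm_le_const
          intro x hx
          rw [uIoc_of_le hτ0.le] at hx
          obtain ⟨hx0, hxτ⟩ := hx
          have hx1 : x ≤ 1 := le_trans hxτ hτ1
          have hstep : ‖h x‖ ≤ x * Real.exp (-μ * x) + Real.exp (-μ * x) := hbound x hx0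
          have he1 : Real.exp (-μ * x) ≤ 1 := by
            rw [Real.exp_le_one_iff]
            nlinarith
          have he0 := (Real.exp_pos (-μ * x)).le
          nlinarith
        rw [norm_mul, norm_of_nonneg (by positivity : (0:ℝ) ≤ 2 * μ ^ 2)]
        rw [sub_zero, abs_of_nonneg hτ0.le] at hbd
        nlinarith [norm_nonneg (∫ s in (0:ℝ)..τ, h s)]
      have hb2 : Tendsto (fun τ : ℝ => 4 * μ ^ 2 * τ) (𝓝[>] (0:ℝ)) (𝓝 0) := by
        have : Tendsto (fun τ : ℝ => 4 * μ ^ 2 * τ) (𝓝 0) (𝓝 0) := by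
          have hcont : Continuous (fun τ : ℝ => 4 * μ ^ 2 * τ) := by fun_prop
          simpa using hcont.tendsto 0
        exact this.mono_left nhdsWithin_le_nhds
      exact squeeze_zero_norm' hb1 hb2
    have := hKlim.add hMlim
    rwa [add_zero] at this
  have hgtop : Tendsto g atTop (𝓝 (2 * μ ^ 2 * J)) := by
    have hev : (fun τ => K τ + 2 * μ ^ 2 * ∫ s in (0:ℝ)..τ, h s) =ᶠ[atTop] g := by
      filter_upwards [eventually_gt_atTop (0:ℝ)] with t ht
      simp only [hg, if_neg (not_le.mpr ht)]
    refine Tendsto.congr' hev ?_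
    have hKlim : Tendsto K atTop (𝓝 0) := by
      have hb1 : ∀ᶠ τ in atTop, ‖K τ‖ ≤ 6 * Real.exp (-μ * τ) + 4 * μ * (τ * Real.exp (-μ * τ)) := by
        filter_upwards [eventually_ge_atTop (1:ℝ)] with τ hτ1
        have hτ0 : (0:ℝ) < τ := lt_of_lt_of_le one_pos hτ1
        have hS : 0 < Real.sinh τ := hsinh τ hτ0
        have hτS : τ ≤ Real.sinh τ := Real.self_le_sinh_iff.mpr hτ0.le
        have hS1 : 1 ≤ Real.sinh τ := le_trans hτ1 hτS
        have hC2S : Real.cosh τ ≤ 2 * Real.sinh τ := by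
          have h1 : Real.cosh τ - Real.sinh τ = Real.exp (-τ) := Real.cosh_sub_sinh τ
          have h2 : Real.exp (-τ) ≤ 1 := by rw [Real.exp_le_one_iff]; linarith
          linarith
        have hCpos : 0 < Real.cosh τ := Real.cosh_pos τ
        have h1 : Real.cosh τ / Real.sinh τ ≤ 2 := by
          rw [div_le_iff₀ hS]; nlinarith
        have h2 : τ / Real.sinh τ ^ 2 ≤ 1 := by
          rw [div_le_one (by positivity)]; nlinarith
        have h3 : τ * Real.cosh τ / Real.sinh τ ≤ 2 * τ := by
          rw [div_le_iff₀ hS]; nlinarith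
        have hn1 : 0 ≤ Real.cosh τ / Real.sinh τ := by positivity
        have hn2 : 0 ≤ τ / Real.sinh τ ^ 2 := by positivity
        have hn3 : 0 ≤ τ * Real.cosh τ / Real.sinh τ := by positivity
        have habs : |2 * (Real.cosh τ / Real.sinh τ) - 2 * (τ / Real.sinh τ ^ 2)
            + 2 * μ * (τ * Real.cosh τ / Real.sinh τ)| ≤ 6 + 4 * μ * τ := by
          rw [abs_le]
          constructor <;> nlinarith
        have hKn : ‖K τ‖ = Real.exp (-μ * τ) * |2 * (Real.cosh τ / Real.sinh τ)
            - 2 * (τ / Real.sinh τ ^ 2) + 2 * μ * (τ * Real.cosh τ / Real.sinh τ)| := by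
          rw [hK, norm_mul, Real.norm_of_nonneg (Real.exp_pos _).le, Real.norm_eq_abs]
        rw [hKn]
        have hstep : Real.exp (-μ * τ) * |2 * (Real.cosh τ / Real.sinh τ) - 2 * (τ / Real.sinh τ ^ 2)
              + 2 * μ * (τ * Real.cosh τ / Real.sinh τ)|
            ≤ Real.exp (-μ * τ) * (6 + 4 * μ * τ) :=
          mul_le_mul_of_nonneg_left habs (Real.exp_pos _).le
        nlinarith [hstep]
      have hb2 : Tendsto (fun τ : ℝ => 6 * Real.exp (-μ * τ) + 4 * μ * (τ * Real.exp (-μ * τ)))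
          atTop (𝓝 0) := by
        have := ((tendsto_exp_neg_mul hμ).const_mul 6).add ((tendsto_mul_exp_neg hμ).const_mul (4 * μ))
        simpa using this
      exact squeeze_zero_norm' hb1 hb2
    have hMlim : Tendsto (fun τ : ℝ => 2 * μ ^ 2 * ∫ s in (0:ℝ)..τ, h s) atTop (𝓝 (2 * μ ^ 2 * J)) :=
      (intervalIntegral_tendsto_integral_Ioi 0 h_int tendsto_id).const_mul (2 * μ ^ 2)
    have := hKlim.add hMlim
    rwa [zero_add] at this
  -- conclusion
  have hInt := integrableOn_Ioi_deriv_of_nonneg hgcont hgderiv hgpos hgtop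
  have hVal := integral_Ioi_of_hasDerivAt_of_nonneg hgcont hgderiv hgpos hgtop
  refine ⟨hInt, ?_⟩
  rw [hVal, hg0]
  have hTS : ∑' n : ℕ, (2 / (μ + 2 * (n:ℝ)) ^ 2)
      = 1 / 2 * ∑' l : ℕ, 1 / ((l : ℝ) + μ / 2) ^ 2 := by
    rw [← tsum_mul_left]
    refine tsum_congr (fun n => ?_)
    have h1 : ((n:ℝ) + μ / 2) ≠ 0 := by positivity
    have h2 : (μ + 2 * (n:ℝ)) ≠ 0 := (hb n).ne'
    field_simp
    ring
  rw [hTS] at hJT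
  have hμ2 : μ ^ 2 ≠ 0 := by positivity
  have hJval : J = 1 / 2 * ∑' l : ℕ, 1 / ((l : ℝ) + μ / 2) ^ 2 - 1 / μ ^ 2 := by linarith
  rw [hJval]
  have hinv : μ ^ 2 * (1 / μ ^ 2) = 1 := by field_simp
  linear_combination (-2:ℝ) * hinv
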